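/- Let m ≥ 1 and let A_m = {0} ∪ {2^{mn} : n ∈ ℕ}. Then the reciprocal set of A_m is Ā_m = { −1 + Σ_{i=0}^{m−1} x_i 2^{i + m·n_i} : x_i ∈ {0,1} not all zero, n_i ∈ ℕ }. That is, if F(q) = Σ_{a ∈ A_m} q^a ∈ F₂[[q]] and F̄ = Σ f̄_k q^k is its inverse, then f̄_k = 1 exactly when k belongs to the displayed set. (In particular, for m = 1 the reciprocal of {0} ∪ {2^n : n ∈ ℕ} is {2^n − 1 : n ∈ ℕ}.) -/

import Mathlib

open PowerSeries Finset

section Stmt13Aux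


lemma zmod2_em (x : ZMod 2) : x = 0 ∨ x = 1 := by revert x; decide

lemma zmod2_eq_of_iff {x y : ZMod 2} (h : x = 1 ↔ y = 1) : x = y := by
  rcases zmod2_em x with hx | hx <;> rcases zmod2_em y with hy | hy <;>
    simp_all

instance : CharP (PowerSeries (ZMod 2)) 2 :=
  charP_of_injective_ringHom (R := ZMod 2) PowerSeries.C_injective 2

lemma coeff_sq (T : PowerSeries (ZMod 2)) (k : ℕ) :
    PowerSeries.coeff k (T ^ 2) =
      if 2 ∣ k then PowerSeries.coeff (k / 2) T else 0 := by
  rw [pow_two, PowerSeries.coeff_mul, Finset.Nat.sum_antidiagonal_eq_sum_range_succ_mk]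
  by_cases h2 : 2 ∣ k
  · obtain ⟨d, rfl⟩ := h2
    have hd : d ∈ Finset.range (2 * d + 1) := by simp; omega
    rw [← Finset.sum_erase_add _ _ hd]
    have hz : ∑ i ∈ (Finset.range (2 * d + 1)).erase d,
        (PowerSeries.coeff i T) * (PowerSeries.coeff (2 * d - i) T) = 0 := by
      refine Finset.sum_involution (fun i _ => 2 * d - i) ?_ ?_ ?_ ?_
      · intro a ha
        simp only [Finset.mem_erase, Finset.mem_range] at ha
        have : 2 * d - (2 * d - a) = a := by omega
        rw [this, mul_comm]
        exact CharTwo.add_self_eq_zero _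
      · intro a ha hfa
        simp only [Finset.mem_erase, Finset.mem_range] at ha
        omega
      · intro a ha
        simp only [Finset.mem_erase, Finset.mem_range] at ha ⊢
        omega
      · intro a ha
        simp only [Finset.mem_erase, Finset.mem_range] at ha
        omega
    rw [hz, zero_add]
    have : 2 * d - d = d := by omega
    rw [this, if_pos ⟨d, rfl⟩]
    have : 2 * d / 2 = d := by omega
    rw [this, ← pow_two]
    have : ∀ x : ZMod 2, x ^ 2 = x := by decide
    exact this _
  · rw [if_neg h2]
    refine Finset.sum_involution (fun i _ => k - i) ?_ ?_ ?_ ?_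
    · intro a ha
      simp only [Finset.mem_range] at ha
      have : k - (k - a) = a := by omega
      rw [this, mul_comm]
      exact CharTwo.add_self_eq_zero _
    · intro a ha hfa
      simp only [Finset.mem_range] at ha
      intro h; apply h2; omega
    · intro a ha
      simp only [Finset.mem_range] at ha ⊢
      omega
    · intro a ha
      simp only [Finset.mem_range] at ha
      omega

lemma coeff_pow_two_pow (T : PowerSeries (ZMod 2)) (j k : ℕ) :
    PowerSeries.coeff k (T ^ (2 ^ j)) =
      if 2 ^ j ∣ k then PowerSeries.coeff (k / 2 ^ j) T else 0 := by
  induction j generalizing k with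
  | zero => simp
  | succ j ih =>
    have : T ^ (2 ^ (j + 1)) = (T ^ (2 ^ j)) ^ 2 := by
      rw [← pow_mul]; ring_nf
    rw [this, coeff_sq]
    by_cases h2 : 2 ∣ k
    · rw [if_pos h2, ih]
      obtain ⟨c, rfl⟩ := h2
      by_cases hj : 2 ^ j ∣ c
      · have h1 : 2 ^ (j + 1) ∣ 2 * c := by
          obtain ⟨e, rfl⟩ := hj
          exact ⟨e, by ring⟩
        rw [if_pos (by simpa using hj), if_pos h1]
        rw [Nat.mul_div_cancel_left _ (by norm_num), pow_succ,
          mul_comm (2 ^ j) 2, Nat.mul_div_mul_left _ _ (by norm_num)]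
      · rw [if_neg (by simpa using hj), if_neg ?_]
        intro h
        apply hj
        obtain ⟨e, he⟩ := h
        rw [pow_succ] at he
        have he' : 2 * c = 2 * (2 ^ j * e) := by rw [he]; ring
        exact ⟨e, by omega⟩
    · rw [if_neg h2, if_neg ?_]
      intro h
      exact h2 (dvd_trans ⟨2 ^ j, by rw [pow_succ]; ring⟩ h)

lemma zmod2_eq_zero_of_ne_one {x : ZMod 2} (h : ¬ x = 1) : x = 0 := by
  rcases zmod2_em x with hx | hx
  · exact hx
  · exact absurd hx h


lemma rep_det {m : ℕ} (hm : 1 ≤ m) (l : Fin m → ℕ)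
    (hl : ∀ i, l i = 0 ∨ ∃ n : ℕ, l i = 2 ^ ((i : ℕ) + m * n)) (i : Fin m) :
    l i = ∑ e ∈ ((∑ j, l j).bitIndices.toFinset.filter (fun e => e % m = (i : ℕ))), 2 ^ e := by
  classical
  set g : Fin m → Finset ℕ := fun j => (l j).bitIndices.toFinset with hg
  have hval : ∀ j, l j = ∑ e ∈ g j, 2 ^ e := fun j =>
    (Finset.twoPowSum_toFinset_bitIndices (l j)).symm
  have hmod : ∀ j, ∀ e ∈ g j, e % m = (j : ℕ) := by
    intro j e he
    rcases hl j with h0 | ⟨n, hn⟩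
    · simp [hg, h0] at he
    · simp only [hg, hn, Nat.bitIndices_two_pow, List.toFinset_cons, List.toFinset_nil,
        LawfulSingleton.insert_empty_eq, Finset.mem_singleton] at he
      subst he
      rw [Nat.add_mul_mod_self_left]
      exact Nat.mod_eq_of_lt j.isLt
  have hdisj : ∀ j ∈ (univ : Finset (Fin m)), ∀ j' ∈ (univ : Finset (Fin m)), j ≠ j' →
      Disjoint (g j) (g j') := by
    intro j _ j' _ hjj
    rw [Finset.disjoint_left]
    intro e hej hej'
    exact hjj (Fin.ext ((hmod j e hej).symm.trans (hmod j' e hej')))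
  have hsum : ∑ j, l j = ∑ e ∈ univ.biUnion g, 2 ^ e := by
    rw [Finset.sum_biUnion hdisj]
    exact Finset.sum_congr rfl fun j _ => hval j
  have hE : (∑ j, l j).bitIndices.toFinset = univ.biUnion g := by
    rw [hsum]
    exact Finset.toFinset_bitIndices_twoPowSum _
  have hfilter : (univ.biUnion g).filter (fun e => e % m = (i : ℕ)) = g i := by
    ext e
    simp only [Finset.mem_filter, Finset.mem_biUnion, Finset.mem_univ, true_and]
    constructor
    · rintro ⟨⟨j, hej⟩, hei⟩
      have : j = i := Fin.ext ((hmod j e hej).symm.trans hei)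
      subst this; exact hej
    · intro he
      exact ⟨⟨i, he⟩, hmod i e he⟩
  rw [hE, hfilter]
  exact hval i

lemma rep_unique {m : ℕ} (hm : 1 ≤ m) (l l' : Fin m → ℕ)
    (hl : ∀ i, l i = 0 ∨ ∃ n : ℕ, l i = 2 ^ ((i : ℕ) + m * n))
    (hl' : ∀ i, l' i = 0 ∨ ∃ n : ℕ, l' i = 2 ^ ((i : ℕ) + m * n))
    (hsum : ∑ i, l i = ∑ i, l' i) : l = l' := by
  funext i
  rw [rep_det hm l hl i, rep_det hm l' hl' i, hsum]

variable (m : ℕ) (hm : 1 ≤ m) (F : PowerSeries (ZMod 2))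
  (hF : ∀ k : ℕ, PowerSeries.coeff k F = 1 ↔ (k = 0 ∨ ∃ n : ℕ, k = 2 ^ (m * n)))

include hF in
lemma coeffS (k : ℕ) :
    PowerSeries.coeff k (F - 1) = 1 ↔ ∃ n : ℕ, k = 2 ^ (m * n) := by
  rw [map_sub, PowerSeries.coeff_one]
  by_cases hk : k = 0
  · subst hk
    rw [if_pos rfl, (hF 0).2 (Or.inl rfl)]
    constructor
    · intro h; exact absurd h (by decide)
    · rintro ⟨n, hn⟩; exact absurd hn.symm (pow_ne_zero _ (by norm_num))
  · rw [if_neg hk, sub_zero, hF k]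
    simp [hk]

include hF in
lemma coeffSpow (i k : ℕ) :
    PowerSeries.coeff k ((F - 1) ^ (2 ^ i)) = 1 ↔
      ∃ n : ℕ, k = 2 ^ (i + m * n) := by
  rw [coeff_pow_two_pow]
  by_cases hd : 2 ^ i ∣ k
  · rw [if_pos hd, coeffS m F hF]
    obtain ⟨c, rfl⟩ := hd
    rw [Nat.mul_div_cancel_left _ (pow_pos (by norm_num) i)]
    constructor
    · rintro ⟨n, rfl⟩; exact ⟨n, by rw [pow_add]⟩
    · rintro ⟨n, hn⟩
      refine ⟨n, ?_⟩
      rw [pow_add] at hn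
      exact Nat.eq_of_mul_eq_mul_left (pow_pos (by norm_num) i) hn
  · rw [if_neg hd]
    constructor
    · intro h; exact absurd h (by decide)
    · rintro ⟨n, rfl⟩
      exact absurd ⟨2 ^ (m * n), by rw [← pow_add]⟩ hd

include hF in
lemma coeff1Spow (i k : ℕ) :
    PowerSeries.coeff k (1 + (F - 1) ^ (2 ^ i)) = 1 ↔
      (k = 0 ∨ ∃ n : ℕ, k = 2 ^ (i + m * n)) := by
  rw [map_add, PowerSeries.coeff_one]
  by_cases hk : k = 0
  · subst hk
    rw [if_pos rfl]
    have h0 : PowerSeries.coeff 0 ((F - 1) ^ (2 ^ i)) = 0 := by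
      apply zmod2_eq_zero_of_ne_one
      rw [coeffSpow m F hF]
      rintro ⟨n, hn⟩
      exact absurd hn.symm (pow_ne_zero _ (by norm_num))
    rw [h0, add_zero]
    simp
  · rw [if_neg hk, zero_add, coeffSpow m F hF]
    simp [hk]

include hm hF in
lemma Fpow : F ^ (2 ^ m) = F + PowerSeries.X := by
  ext k
  rw [coeff_pow_two_pow, map_add, PowerSeries.coeff_X]
  have hF0 : PowerSeries.coeff 0 F = 1 := (hF 0).2 (Or.inl rfl)
  have hF1 : PowerSeries.coeff 1 F = 1 :=
    (hF 1).2 (Or.inr ⟨0, by simp⟩)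
  rcases Nat.lt_or_ge k 2 with hk2 | hk2
  · interval_cases k
    · rw [if_pos (dvd_zero (2 ^ m)), if_neg (show ¬ (0 : ℕ) = 1 by norm_num),
        Nat.zero_div, hF0, add_zero]
    · have h2m : 2 ≤ 2 ^ m := by
        calc 2 = 2 ^ 1 := by norm_num
        _ ≤ 2 ^ m := Nat.pow_le_pow_right (by norm_num) hm
      have hnd : ¬ (2 ^ m ∣ 1) := by
        intro h
        have := Nat.le_of_dvd (by norm_num) h
        omega
      rw [if_neg hnd, if_pos rfl, hF1]
      decide
  · rw [if_neg (show ¬ k = 1 by omega), add_zero]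
    by_cases hd : 2 ^ m ∣ k
    · rw [if_pos hd]
      apply zmod2_eq_of_iff
      rw [hF, hF]
      obtain ⟨c, rfl⟩ := hd
      have hc : 2 ^ m * c / 2 ^ m = c :=
        Nat.mul_div_cancel_left _ (pow_pos (by norm_num) m)
      rw [hc]
      have hmpos : 0 < 2 ^ m := pow_pos (by norm_num) m
      constructor
      · rintro (rfl | ⟨n, rfl⟩)
        · omega
        · exact Or.inr ⟨n + 1, by rw [← pow_add, Nat.mul_succ]; ring_nf⟩
      · rintro (h | ⟨n, hn⟩)
        · omega
        · rcases Nat.eq_zero_or_pos n with rfl | hn0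
          · rw [Nat.mul_zero, pow_zero] at hn
            have h2m : 2 ≤ 2 ^ m := by
              calc 2 = 2 ^ 1 := by norm_num
              _ ≤ 2 ^ m := Nat.pow_le_pow_right (by norm_num) hm
            have : 2 ^ m ≤ 1 := Nat.le_of_dvd one_pos ⟨c, hn.symm⟩
            omega
          · refine Or.inr ⟨n - 1, ?_⟩
            have : m * n = m + m * (n - 1) := by
              cases n with
              | zero => omega
              | succ n' => simp [Nat.mul_succ]; ring
            rw [this, pow_add] at hn
            exact Nat.eq_of_mul_eq_mul_left hmpos hn
    · rw [if_neg hd]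
      symm
      apply zmod2_eq_zero_of_ne_one
      rw [hF]
      rintro (rfl | ⟨n, rfl⟩)
      · omega
      · rcases Nat.eq_zero_or_pos n with rfl | hn0
        · simp at hk2
        · apply hd
          have : m * n = m + m * (n - 1) := by
            cases n with
            | zero => omega
            | succ n' => simp [Nat.mul_succ]; ring
          rw [this, pow_add]
          exact Dvd.intro _ rfl

lemma fin_geom_sum : ∑ i : Fin m, 2 ^ (i : ℕ) = 2 ^ m - 1 := by
  rw [Fin.sum_univ_eq_sum_range]
  induction m with
  | zero => simp
  | succ n ih =>
    rw [Finset.sum_range_succ, ih, pow_succ]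
    have : 1 ≤ 2 ^ n := Nat.one_le_two_pow
    omega

end Stmt13Aux


/-- Let `m ≥ 1` and let `F ∈ F₂[[q]]` be the generating function of
`A_m = {0} ∪ {2^{mn} : n ∈ ℕ}`, with inverse `G = Σ f̄_k q^k`.  Then `f̄_k = 1` exactly
when `k = -1 + Σ_{i=0}^{m-1} x_i 2^{i + m nᵢ}` for some `x_i ∈ {0,1}` not all zero and
`nᵢ ∈ ℕ` (stated as `k + 1 = Σ_i x_i 2^{i + m nᵢ}` to stay in `ℕ`). -/
theorem stmt13 (m : ℕ) (hm : 1 ≤ m) (F G : PowerSeries (ZMod 2))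
    (hF : ∀ k : ℕ, PowerSeries.coeff k F = 1 ↔ (k = 0 ∨ ∃ n : ℕ, k = 2 ^ (m * n)))
    (hFG : F * G = 1) :
    ∀ k : ℕ, PowerSeries.coeff k G = 1 ↔
      ∃ x : Fin m → ℕ, (∀ i, x i ≤ 1) ∧ (∃ i, x i ≠ 0) ∧
        ∃ ν : Fin m → ℕ, k + 1 = ∑ i : Fin m, x i * 2 ^ ((i : ℕ) + m * ν i) := by
  classical
  intro k
  have hprime : Fact (Nat.Prime 2) := ⟨Nat.prime_two⟩
  set P : PowerSeries (ZMod 2) := ∏ i : Fin m, (1 + (F - 1) ^ (2 ^ (i : ℕ))) with hPdef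
  have hfac : ∀ i : Fin m, (1 : PowerSeries (ZMod 2)) + (F - 1) ^ (2 ^ (i : ℕ))
      = (1 + (F - 1)) ^ (2 ^ (i : ℕ)) := by
    intro i
    rw [add_pow_char_pow (p := 2), one_pow]
  have hPeq : P = F ^ (2 ^ m - 1) := by
    rw [hPdef]
    calc ∏ i : Fin m, (1 + (F - 1) ^ (2 ^ (i : ℕ)))
        = ∏ i : Fin m, (1 + (F - 1)) ^ (2 ^ (i : ℕ)) := Finset.prod_congr rfl fun i _ => hfac i
      _ = (1 + (F - 1)) ^ (∑ i : Fin m, 2 ^ (i : ℕ)) := Finset.prod_pow_eq_pow_sum _ _ _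
      _ = F ^ (2 ^ m - 1) := by rw [fin_geom_sum m]; congr 1; ring
  have h2m1 : 2 ^ m - 1 + 1 = 2 ^ m := Nat.succ_pred_eq_of_pos (pow_pos two_pos m)
  have hFP : F * P = F + PowerSeries.X := by
    rw [hPeq, mul_comm, ← pow_succ, h2m1, Fpow m hm F hF]
  have hPG : P = 1 + PowerSeries.X * G := by
    calc P = (F * G) * P := by rw [hFG, one_mul]
      _ = G * (F * P) := by ring
      _ = G * (F + PowerSeries.X) := by rw [hFP]
      _ = F * G + PowerSeries.X * G := by ring
      _ = 1 + PowerSeries.X * G := by rw [hFG]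
  have hcoeff : PowerSeries.coeff k G = PowerSeries.coeff (k + 1) P := by
    rw [hPG, map_add, PowerSeries.coeff_one, if_neg (Nat.succ_ne_zero k), zero_add,
      PowerSeries.coeff_succ_X_mul]
  have hQ : ∀ (b : Fin m → ℕ) (i : Fin m), ¬(b i = 0 ∨ ∃ n : ℕ, b i = 2 ^ ((i : ℕ) + m * n)) →
      PowerSeries.coeff (b i) (1 + (F - 1) ^ (2 ^ (i : ℕ))) = 0 := fun b i h =>
    zmod2_eq_zero_of_ne_one (fun h1 => h ((coeff1Spow m F hF _ _).1 h1))
  have hPco : ∀ s : ℕ, PowerSeries.coeff s P = 1 ↔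
      ∃ l : Fin m → ℕ, (∀ i, l i = 0 ∨ ∃ n : ℕ, l i = 2 ^ ((i : ℕ) + m * n)) ∧ ∑ i, l i = s := by
    intro s
    rw [hPdef, PowerSeries.coeff_prod]
    constructor
    · intro h
      by_contra hno
      have hz : ∀ b ∈ Finset.finsuppAntidiag (Finset.univ : Finset (Fin m)) s,
          (∏ i : Fin m, PowerSeries.coeff (b i) (1 + (F - 1) ^ (2 ^ (i : ℕ)))) = 0 := by
        intro b hb
        by_cases hall : ∀ i : Fin m, (b i = 0 ∨ ∃ n : ℕ, b i = 2 ^ ((i : ℕ) + m * n))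
        · exact absurd ⟨fun i => b i, hall, (Finset.mem_finsuppAntidiag.1 hb).1⟩ hno
        · rw [not_forall] at hall
          obtain ⟨i, hi⟩ := hall
          exact Finset.prod_eq_zero (Finset.mem_univ i) (hQ (fun j => b j) i hi)
      rw [Finset.sum_eq_zero hz] at h
      exact one_ne_zero h.symm
    · rintro ⟨l, hQl, hsum⟩
      set b : Fin m →₀ ℕ := Finsupp.equivFunOnFinite.symm l with hbdef
      have hbcoe : ⇑b = l := Equiv.apply_symm_apply Finsupp.equivFunOnFinite l
      have hbmem : b ∈ Finset.finsuppAntidiag (Finset.univ : Finset (Fin m)) s :=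
        Finset.mem_finsuppAntidiag.2 ⟨by rw [Finset.sum_congr rfl fun i _ => congrFun hbcoe i]; exact hsum,
          Finset.subset_univ _⟩
      have hother : ∀ b' ∈ Finset.finsuppAntidiag (Finset.univ : Finset (Fin m)) s, b' ≠ b →
          (∏ i : Fin m, PowerSeries.coeff (b' i) (1 + (F - 1) ^ (2 ^ (i : ℕ)))) = 0 := by
        intro b' hb' hne
        by_cases hall : ∀ i : Fin m, (b' i = 0 ∨ ∃ n : ℕ, b' i = 2 ^ ((i : ℕ) + m * n))
        · exfalso
          have hs' : ∑ i, (fun j => b' j) i = ∑ i, l i := by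
            rw [hsum]
            exact (Finset.mem_finsuppAntidiag.1 hb').1
          have hbl : (fun j => b' j) = l := rep_unique hm _ _ hall hQl hs'
          apply hne
          ext i
          exact (congrFun hbl i).trans (congrFun hbcoe i).symm
        · rw [not_forall] at hall
          obtain ⟨i, hi⟩ := hall
          exact Finset.prod_eq_zero (Finset.mem_univ i) (hQ (fun j => b' j) i hi)
      rw [Finset.sum_eq_single_of_mem b hbmem hother]
      refine Finset.prod_eq_one fun i _ => (coeff1Spow m F hF _ _).2 ?_
      rw [congrFun hbcoe i]
      exact hQl i
  rw [hcoeff, hPco (k + 1)]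
  constructor
  · rintro ⟨l, hQl, hsum⟩
    set x : Fin m → ℕ := fun i => if l i = 0 then 0 else 1 with hx
    set ν : Fin m → ℕ := fun i =>
      if h : ∃ n : ℕ, l i = 2 ^ ((i : ℕ) + m * n) then h.choose else 0 with hν
    have hxl : ∀ i, l i = x i * 2 ^ ((i : ℕ) + m * ν i) := by
      intro i
      by_cases h0 : l i = 0
      · simp [hx, h0]
      · have hex : ∃ n : ℕ, l i = 2 ^ ((i : ℕ) + m * n) := (hQl i).resolve_left h0
        simp only [hx, hν, if_neg h0, dif_pos hex, one_mul]
        exact hex.choose_spec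
    refine ⟨x, ?_, ?_, ν, ?_⟩
    · intro i; simp only [hx]; split <;> omega
    · by_contra hxz
      push_neg at hxz
      have hlz : ∀ i, l i = 0 := by
        intro i
        rw [hxl i, hxz i, zero_mul]
      have hz0 : ∑ i : Fin m, l i = 0 := Finset.sum_eq_zero fun i _ => hlz i
      rw [hsum] at hz0
      exact Nat.succ_ne_zero k hz0
    · rw [← hsum]
      exact Finset.sum_congr rfl fun i _ => hxl i
  · rintro ⟨x, hx1, ⟨i0, hi0⟩, ν, heq⟩
    refine ⟨fun i => x i * 2 ^ ((i : ℕ) + m * ν i), fun i => ?_, heq.symm⟩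
    rcases Nat.le_one_iff_eq_zero_or_eq_one.1 (hx1 i) with h | h
    · exact Or.inl (by dsimp only; rw [h, zero_mul])
    · exact Or.inr ⟨ν i, by dsimp only; rw [h, one_mul]⟩
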